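/- The full inclusion functor from the category of totally ordered sets into the category Pos of partially ordered sets preserves all colimits that exist in the category of totally ordered sets: if a diagram D : J ⥤ Tos has a colimit cocone in Tos, its image under the inclusion is a colimit cocone in Pos. -/

import Mathlib

open CategoryTheory Limits

attribute [local instance] CategoryTheory.ConcreteCategory.instFunLike

/-- The full inclusion of the category of totally ordered sets (`LinOrd`) into the
category of partially ordered sets (`PartOrd`). -/
def linOrdToPartOrd : LinOrd ⥤ PartOrd where
  obj X := PartOrd.of X
  map f := PartOrd.ofHom f.hom

/-- Build a `LinearOrder` from an `IsLinearOrder` relation. -/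
noncomputable def linOfIsLin {X : Type*} (s : X → X → Prop) (hs : IsLinearOrder X s) :
    LinearOrder X where
  le := s
  le_refl := hs.refl
  le_trans := hs.trans
  le_antisymm := hs.antisymm
  le_total := hs.total
  toDecidableLE := Classical.decRel _

/-- Szpilrajn with a prescribed comparison. -/
theorem exists_total_ext {X : Type*} [PartialOrder X] {a b : X} (hab : ¬ a ≤ b) :
    ∃ s : X → X → Prop, IsLinearOrder X s ∧ (∀ p q : X, p ≤ q → s p q) ∧ s b a := by
  let r : X → X → Prop := fun p q => p ≤ q ∨ (p ≤ b ∧ a ≤ q)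
  have : IsPartialOrder X r :=
    { refl := fun x => Or.inl le_rfl
      trans := by
        rintro x y z (hxy | ⟨hxb, hay⟩) (hyz | ⟨hyb, haz⟩)
        · exact Or.inl (hxy.trans hyz)
        · exact Or.inr ⟨hxy.trans hyb, haz⟩
        · exact Or.inr ⟨hxb, hay.trans hyz⟩
        · exact Or.inr ⟨hxb, haz⟩
      antisymm := by
        rintro x y (hxy | ⟨hxb, hay⟩) (hyx | ⟨hyb, hax⟩)
        · exact le_antisymm hxy hyx
        · exact absurd ((hax.trans hxy).trans hyb) hab
        · exact absurd ((hay.trans hyx).trans hxb) hab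
        · exact absurd (hay.trans hyb) hab }
  obtain ⟨s, hs, hrs⟩ := extend_partialOrder r
  exact ⟨s, hs, fun p q h => hrs _ _ (Or.inl h), hrs _ _ (Or.inr ⟨le_rfl, le_rfl⟩)⟩

variable {J : Type u} [Category.{v} J]

/-- Cocone over `D` in `LinOrd` induced by a cocone in `PartOrd` and a linear extension. -/
noncomputable def coconeOfLin (D : J ⥤ LinOrd) (s : Cocone (D ⋙ linOrdToPartOrd))
    (ℓ : s.pt → s.pt → Prop) (hℓ : IsLinearOrder s.pt ℓ)
    (hext : ∀ p q : s.pt, p ≤ q → ℓ p q) : Cocone D where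
  pt := @LinOrd.of s.pt (linOfIsLin ℓ hℓ)
  ι :=
    { app := fun j =>
        @LinOrd.ofHom _ _ _ (linOfIsLin ℓ hℓ) (@OrderHom.mk _ _ _ (linOfIsLin ℓ hℓ).toPreorder (fun y => s.ι.app j y)
                                                (fun a b hab => hext _ _ ((s.ι.app j).hom.monotone hab)))
      naturality := fun i j g => by
        have := s.ι.naturality g
        ext y
        have h2 : s.ι.app i y = s.ι.app j (D.map g y) := by
          rw [← s.w g]; rfl
        exact h2.symm }

theorem linOrdToPartOrd_preserves_existing_colimits
    {J : Type u} [Category.{v} J] (D : J ⥤ LinOrd)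
    (c : Cocone D) (hc : Nonempty (IsColimit c)) :
    Nonempty (IsColimit (linOrdToPartOrd.mapCocone c)) := by
  obtain ⟨h⟩ := hc
  -- joint surjectivity of the colimit cocone
  have hsurj : ∀ x : c.pt, ∃ (j : J) (y : D.obj j), c.ι.app j y = x := by
    intro x
    let S : LinOrd := LinOrd.of {x : c.pt // ∃ (j : J) (y : D.obj j), c.ι.app j y = x}
    let cS : Cocone D :=
      { pt := S
        ι :=
          { app := fun j =>
              LinOrd.ofHom { toFun := fun y => ⟨c.ι.app j y, ⟨j, y, rfl⟩⟩
                             monotone' := fun a b hab => (c.ι.app j).hom.monotone hab }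
            naturality := fun i j g => by
              ext y
              have h2 : c.ι.app i y = c.ι.app j (D.map g y) := by
                rw [← c.w g]; rfl
              exact Subtype.ext h2.symm } }
    let g : c.pt ⟶ S := h.desc cS
    let incl : S ⟶ c.pt := LinOrd.ofHom ⟨Subtype.val, fun a b hab => hab⟩
    have : g ≫ incl = 𝟙 c.pt := by
      refine h.hom_ext fun j => ?_
      rw [← Category.assoc, h.fac cS j]
      ext y
      rfl
    have hx : incl (g x) = x := by simpa using congrArg (fun (k : c.pt ⟶ c.pt) => ConcreteCategory.hom k x) this
    obtain ⟨j, y, hy⟩ := (g x).2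
    exact ⟨j, y, hy.trans hx⟩
  -- key: descent for any cocone in PartOrd
  have key : ∀ s : Cocone (D ⋙ linOrdToPartOrd),
      ∃ f : c.pt →o s.pt, ∀ (j : J) (y : D.obj j), f (c.ι.app j y) = s.ι.app j y := by
    intro s
    -- the underlying function agrees for all linear extensions
    have fn : ∀ (ℓ : s.pt → s.pt → Prop) (hℓ : IsLinearOrder s.pt ℓ)
        (hext : ∀ p q : s.pt, p ≤ q → ℓ p q) (j : J) (y : D.obj j),
        (h.desc (coconeOfLin D s ℓ hℓ hext) : c.pt → s.pt) (c.ι.app j y) = s.ι.app j y := by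
      intro ℓ hℓ hext j y
      have := h.fac (coconeOfLin D s ℓ hℓ hext) j
      exact congrArg (fun (k : D.obj j ⟶ (coconeOfLin D s ℓ hℓ hext).pt) => ConcreteCategory.hom k y) this
    obtain ⟨ℓ₀, hℓ₀, hext₀⟩ := extend_partialOrder ((· ≤ ·) : s.pt → s.pt → Prop)
    set f₀ : c.pt → s.pt := (h.desc (coconeOfLin D s ℓ₀ hℓ₀ hext₀) : c.pt → s.pt) with hf₀
    have mono : Monotone f₀ := by
      intro p q hpq
      by_contra hnot
      obtain ⟨ℓ, hℓ, hext, hba⟩ := exists_total_ext hnot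
      -- the two descents agree as functions
      have agree : ∀ x : c.pt, f₀ x = (h.desc (coconeOfLin D s ℓ hℓ hext) : c.pt → s.pt) x := by
        intro x
        obtain ⟨j, y, rfl⟩ := hsurj x
        rw [hf₀, fn ℓ₀ hℓ₀ hext₀, fn ℓ hℓ hext]
      have hm : ℓ (f₀ p) (f₀ q) := by
        rw [agree p, agree q]
        exact (h.desc (coconeOfLin D s ℓ hℓ hext)).hom.monotone hpq
      exact hnot (le_of_eq (hℓ.antisymm _ _ hm hba))
    exact ⟨⟨f₀, mono⟩, fn ℓ₀ hℓ₀ hext₀⟩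
  refine ⟨⟨fun s => PartOrd.ofHom (key s).choose, fun s j => ?_, fun s m hm => ?_⟩⟩
  · ext y
    exact (key s).choose_spec j y
  · ext x
    obtain ⟨j, y, rfl⟩ := hsurj x
    have h1 : (m : c.pt → s.pt) (c.ι.app j y) = s.ι.app j y := by
      have := hm j
      calc (m : c.pt → s.pt) (c.ι.app j y)
          = ((linOrdToPartOrd.mapCocone c).ι.app j ≫ m) y := rfl
        _ = s.ι.app j y := by rw [this]
    rw [h1]
    exact ((key s).choose_spec j y).symm
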